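/- arXiv:1503.04893 — 2 statements merged into one kernel-verified Lean document; each statement's English description precedes it below -/
import Mathlib

section
/- Let w₁, w₂, w₃ be positive integers, y₁, y₂ nonnegative integers and n a positive integer. Define E₄(w₁,w₂,w₃) = n ∑_{k=0}^{n−1} binom(n−1,k) · β_{k,q^{w₂w₃}}^{(n−k+1)}(w₁y₁) · q^{w₁w₂w₃(n−k)y₁} · q^{w₁w₂w₃ y₂} · [w₁w₂]_q · [w₂w₃]_q^k · [w₁w₃]_q^{n−1−k} · ∑_{i=0}^{w₃−1} q^{2w₁w₂ i} · β_{n−1−k,q^{w₁w₃}}^{(2)}(w₂y₂ + (w₂/w₃)i) + (q−1) ∑_{k=0}^{n} binom(n,k) · β_{k,q^{w₂w₃}}^{(n−k+1)}(w₁y₁) · q^{w₁w₂w₃(n−k)y₁} · [w₁w₂]_q · [w₂w₃]_q^k · [w₁w₃]_q^{n−k} · ∑_{i=0}^{w₃−1} q^{w₁w₂ i} · β_{n−k,q^{w₁w₃}}(w₂y₂ + (w₂/w₃)i). Then E₄(w_{σ(1)}, w_{σ(2)}, w_{σ(3)}) = E₄(w₁, w₂, w₃) for every permutation σ of {1,2,3}.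 -/
open Finset

/-- The `q`-number `[x]_q = (1 - q^x)/(1 - q)` of a nonnegative integer `x`. -/
noncomputable def qnum {K : Type*} [Field K] (q : K) (x : ℕ) : K :=
  (1 - q ^ x) / (1 - q)

/-- The generalized Carlitz `q`-Bernoulli polynomials with the value `Q^x` given
explicitly as `X` (so `Q^{jx}` is interpreted as `X^j`):
`β_{n,Q}^{(h)}(x) = (1-Q)^{-n} ∑_{j=0}^{n} C(n,j) (-1)^j X^j (j+h)/[j+h]_Q`.
This allows rational arguments `x` for which `Q^x` is an integer power of `q`. -/
noncomputable def carlitzBetaGen {K : Type*} [Field K] (Q X : K) (h n : ℕ) : K :=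
  ((1 - Q) ^ n)⁻¹ * ∑ j ∈ Finset.range (n + 1),
    (n.choose j : K) * (-1) ^ j * X ^ j * ((j + h : ℕ) : K) / qnum Q (j + h)

/-- The generalized Carlitz `q`-Bernoulli polynomials
`β_{n,q}^{(h)}(x) = (1-q)^{-n} ∑_{j=0}^{n} C(n,j) (-1)^j q^{jx} (j+h)/[j+h]_q`
at a nonnegative integer argument `x`. -/
noncomputable def carlitzBetaH {K : Type*} [Field K] (q : K) (h n x : ℕ) : K :=
  carlitzBetaGen q (q ^ x) h n

/-- The expression `E₄(w₁,w₂,w₃)` of Statement 3 (Theorem 4 of the paper); the value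
`β_{n,Q}^{(h)}(w₂y₂ + (w₂/w₃)i)` with `Q = q^{w₁w₃}` is interpreted via
`Q^{j(w₂y₂ + (w₂/w₃)i)} = q^{j(w₁w₂w₃y₂ + w₁w₂ i)}`. -/
noncomputable def E4 {K : Type*} [Field K] (q : K) (n y1 y2 w1 w2 w3 : ℕ) : K :=
  (n : K) *
    (∑ k ∈ Finset.range n,
      ((n - 1).choose k : K) *
        carlitzBetaH (q ^ (w2 * w3)) (n - k + 1) k (w1 * y1) *
        q ^ (w1 * w2 * w3 * (n - k) * y1) * q ^ (w1 * w2 * w3 * y2) *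
        qnum q (w1 * w2) * qnum q (w2 * w3) ^ k * qnum q (w1 * w3) ^ (n - 1 - k) *
        ∑ i ∈ Finset.range w3,
          q ^ (2 * (w1 * w2) * i) *
            carlitzBetaGen (q ^ (w1 * w3)) (q ^ (w1 * w2 * w3 * y2 + w1 * w2 * i)) 2
              (n - 1 - k))
  + (q - 1) *
    ∑ k ∈ Finset.range (n + 1),
      (n.choose k : K) *
        carlitzBetaH (q ^ (w2 * w3)) (n - k + 1) k (w1 * y1) *
        q ^ (w1 * w2 * w3 * (n - k) * y1) *
        qnum q (w1 * w2) * qnum q (w2 * w3) ^ k * qnum q (w1 * w3) ^ (n - k) *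
        ∑ i ∈ Finset.range w3,
          q ^ (w1 * w2 * i) *
            carlitzBetaGen (q ^ (w1 * w3)) (q ^ (w1 * w2 * w3 * y2 + w1 * w2 * i)) 1
              (n - k)

section SymmAux

variable {K : Type*} [Field K]

private lemma alt_sum_chooseK [CharZero K] (n : ℕ) :
    ∑ j ∈ Finset.range (n+1), (-1:K)^j * (n.choose j : K) = if n = 0 then 1 else 0 := by
  split_ifs with h0
  · subst h0; simp
  · exact_mod_cast Int.alternating_sum_range_choose_of_ne h0

private lemma choose_id_a {n k j : ℕ} (hk : k ≤ n) (hj : j ≤ k) :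
    n.choose k * k.choose j = n.choose (n-k+j) * (n-k+j).choose j := by
  rw [Nat.choose_mul (n := n) hj, Nat.choose_mul (n := n) (show j ≤ n-k+j by omega),
    show n-k+j-j = n-k by omega]
  congr 1
  rw [← Nat.choose_symm (show k - j ≤ n - j by omega), show n-j-(k-j) = n-k by omega]

private lemma choose_id_b {u j l : ℕ} (h : j + l ≤ u) :
    u.choose j * (u-j).choose l = u.choose l * (u-l).choose j := by
  have h1 := Nat.choose_mul (n := u) (k := j + l) (Nat.le_add_right j l)
  have h2 := Nat.choose_mul (n := u) (k := j + l) (Nat.le_add_left l j)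
  rw [show j+l-j = l by omega] at h1
  rw [show j+l-l = j by omega] at h2
  have h3 : (j+l).choose j = (j+l).choose l := by
    rw [← Nat.choose_symm (Nat.le_add_right j l), show j+l-j = l by omega]
  rw [← h1, h3, h2]

private lemma sum_triangle_reindex {M : Type*} [AddCommMonoid M] (n : ℕ) (F : ℕ → ℕ → M) :
    ∑ k ∈ range (n+1), ∑ j ∈ range (k+1), F k j
    = ∑ u ∈ range (n+1), ∑ j ∈ range (u+1), F (n-u+j) j := by
  rw [sum_sigma', sum_sigma']
  refine sum_nbij' (fun p => ⟨n - p.1 + p.2, p.2⟩) (fun p => ⟨n - p.1 + p.2, p.2⟩)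
    ?_ ?_ ?_ ?_ ?_ <;>
    simp only [mem_sigma, mem_range, Sigma.mk.inj_iff, heq_eq_eq, Sigma.forall, and_imp] <;>
    intro x y hx hy
  · omega
  · omega
  · exact ⟨by omega, trivial⟩
  · exact ⟨by omega, trivial⟩
  · rw [show n - (n - x + y) + y = x by omega]

private lemma sum_triangle_swap {M : Type*} [AddCommMonoid M] (u : ℕ) (F : ℕ → ℕ → M) :
    ∑ j ∈ range (u+1), ∑ l ∈ range (u-j+1), F j l
    = ∑ l ∈ range (u+1), ∑ j ∈ range (u-l+1), F j l := by
  rw [sum_sigma', sum_sigma']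
  refine sum_nbij' (fun p => ⟨p.2, p.1⟩) (fun p => ⟨p.2, p.1⟩) ?_ ?_ ?_ ?_ ?_ <;>
    simp only [mem_sigma, mem_range, Sigma.mk.inj_iff, heq_eq_eq, Sigma.forall, and_imp] <;>
    intro x y hx hy
  all_goals first | omega | trivial

private lemma collapse [CharZero K] (u : ℕ) (g : ℕ → K) :
    ∑ j ∈ range (u+1), (u.choose j : K) * (-1)^j *
      ∑ l ∈ range (u-j+1), ((u-j).choose l : K) * (-1)^l * g l
    = (-1)^u * g u := by
  have h1 : ∀ j ∈ range (u+1), (u.choose j : K) * (-1)^j *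
      ∑ l ∈ range (u-j+1), ((u-j).choose l : K) * (-1)^l * g l
      = ∑ l ∈ range (u-j+1), ((u.choose j : K) * ((u-j).choose l : K)) * ((-1)^j * (-1)^l * g l) := by
    intro j hj
    rw [mul_sum]
    exact sum_congr rfl fun l hl => by ring
  rw [sum_congr rfl h1, sum_triangle_swap u
      (fun j l => ((u.choose j : K) * ((u-j).choose l : K)) * ((-1)^j * (-1)^l * g l))]
  have h2 : ∀ l ∈ range (u+1), ∑ j ∈ range (u-l+1),
      ((u.choose j : K) * ((u-j).choose l : K)) * ((-1)^j * (-1)^l * g l)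
      = ((u.choose l : K) * (-1)^l * g l) * ∑ j ∈ range (u-l+1), (-1:K)^j * ((u-l).choose j : K) := by
    intro l hl
    rw [mul_sum]
    refine sum_congr rfl fun j hj => ?_
    simp only [mem_range] at hl hj
    have hb : u.choose j * (u-j).choose l = u.choose l * (u-l).choose j :=
      choose_id_b (by omega)
    have hbK : (u.choose j : K) * ((u-j).choose l : K) = (u.choose l : K) * ((u-l).choose j : K) := by
      exact_mod_cast congrArg (fun t : ℕ => (t : K)) hb
    rw [hbK]; ring
  rw [sum_congr rfl h2]
  have h3 : ∀ l ∈ range (u+1),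
      ((u.choose l : K) * (-1)^l * g l) * ∑ j ∈ range (u-l+1), (-1:K)^j * ((u-l).choose j : K)
      = ((u.choose l : K) * (-1)^l * g l) * (if u - l = 0 then 1 else 0) := by
    intro l hl; rw [alt_sum_chooseK]
  rw [sum_congr rfl h3]
  rw [Finset.sum_eq_single_of_mem u (self_mem_range_succ u)]
  · simp
  · intro l hl hlu
    simp only [mem_range] at hl
    rw [if_neg (by omega), mul_zero]

private lemma keylem [CharZero K] (n : ℕ) (γ : K) (f g : ℕ → K) :
    ∑ k ∈ range (n+1), (n.choose k : K) * γ^(n-k) *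
      (∑ j ∈ range (k+1), (k.choose j : K) * (-1)^j * γ^j * f (n-k+j)) *
      (∑ l ∈ range (n-k+1), ((n-k).choose l : K) * (-1)^l * g l)
    = ∑ u ∈ range (n+1), (n.choose u : K) * (-1)^u * γ^u * f u * g u := by
  have h1 : ∀ k ∈ range (n+1), (n.choose k : K) * γ^(n-k) *
      (∑ j ∈ range (k+1), (k.choose j : K) * (-1)^j * γ^j * f (n-k+j)) *
      (∑ l ∈ range (n-k+1), ((n-k).choose l : K) * (-1)^l * g l)
      = ∑ j ∈ range (k+1), ((n.choose k : K) * (k.choose j : K)) *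
          ((-1)^j * γ^(n-k+j) * f (n-k+j) *
            ∑ l ∈ range (n-k+1), ((n-k).choose l : K) * (-1)^l * g l) := by
    intro k hk
    rw [mul_assoc, Finset.sum_mul_sum, Finset.mul_sum]
    refine sum_congr rfl fun j hj => ?_
    rw [← Finset.mul_sum, pow_add]
    ring
  rw [sum_congr rfl h1, sum_triangle_reindex n (fun k j => ((n.choose k : K) * (k.choose j : K)) *
      ((-1)^j * γ^(n-k+j) * f (n-k+j) *
        ∑ l ∈ range (n-k+1), ((n-k).choose l : K) * (-1)^l * g l))]
  refine sum_congr rfl fun u hu => ?_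
  simp only [mem_range] at hu
  have h2 : ∀ j ∈ range (u+1), ((n.choose (n-u+j) : K) * ((n-u+j).choose j : K)) *
      ((-1)^j * γ^(n-(n-u+j)+j) * f (n-(n-u+j)+j) *
        ∑ l ∈ range (n-(n-u+j)+1), ((n-(n-u+j)).choose l : K) * (-1)^l * g l)
      = ((n.choose u : K) * γ^u * f u) * ((u.choose j : K) * (-1)^j *
          ∑ l ∈ range (u-j+1), ((u-j).choose l : K) * (-1)^l * g l) := by
    intro j hj
    simp only [mem_range] at hj
    have e1 : n-(n-u+j)+j = u := by omega
    have e2 : n-(n-u+j) = u - j := by omega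
    have hc : n.choose (n-u+j) * (n-u+j).choose j = n.choose u * u.choose j := by
      have := choose_id_a (show n-u+j ≤ n by omega) (show j ≤ n-u+j by omega)
      rwa [show n-(n-u+j)+j = u by omega] at this
    have hcK : (n.choose (n-u+j) : K) * ((n-u+j).choose j : K)
        = (n.choose u : K) * (u.choose j : K) := by exact_mod_cast hc
    rw [e1, e2, hcK]
    ring
  rw [sum_congr rfl h2, ← mul_sum, collapse u g]
  ring

private lemma one_sub_ne {x : K} (h : x ≠ 1) : (1:K) - x ≠ 0 := sub_ne_zero_of_ne (Ne.symm h)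

private lemma cbg_expand (q : K) (hq : q ≠ 1) (hq' : ∀ e : ℕ, 0 < e → q ^ e ≠ 1)
    (p : ℕ) (hp : 0 < p) (X : K) (h r : ℕ) (hh : 0 < h) :
    qnum q p ^ r * carlitzBetaGen (q^p) X h r
    = ((1-q)⁻¹)^r * ∑ j ∈ range (r+1), (r.choose j : K) * (-1)^j * X^j * ((j+h:ℕ):K) *
        ((1-q^p) / (1 - q^(p*(j+h)))) := by
  have hp1 : (1:K) - q^p ≠ 0 := one_sub_ne (hq' p hp)
  have hq0 : (1:K) - q ≠ 0 := one_sub_ne hq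
  rw [carlitzBetaGen, ← mul_assoc, Finset.mul_sum, Finset.mul_sum]
  refine sum_congr rfl fun j hj => ?_
  have hpj : (1:K) - q^(p*(j+h)) ≠ 0 := one_sub_ne (hq' _ (Nat.mul_pos hp (by omega)))
  rw [qnum, qnum, ← pow_mul, div_pow]
  field_simp
  have hI : ((1-q)⁻¹)^r * (1-q)^r = (1:K) := by rw [inv_pow, inv_mul_cancel₀ (pow_ne_zero r hq0)]
  linear_combination (-((r.choose j : K) * X ^ j * ((j + h : ℕ) : K))) * hI

private lemma inner_expand (q : K) (hq : q ≠ 1) (hq' : ∀ e : ℕ, 0 < e → q ^ e ≠ 1)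
    (e p c h r Y : ℕ) (he : 0 < e) (hp : 0 < p) (hh : 0 < h) :
    qnum q p ^ r * ∑ i ∈ range c, q^(h*e*i) * carlitzBetaGen (q^p) (q^(Y + e*i)) h r
    = ((1-q)⁻¹)^r * ∑ l ∈ range (r+1), (r.choose l : K) * (-1)^l * (q^Y)^l * ((l+h:ℕ):K) *
        ((1-q^p) * (1 - q^(e*c*(l+h))) / ((1 - q^(p*(l+h))) * (1 - q^(e*(l+h))))) := by
  rw [Finset.mul_sum]
  have step : ∀ i ∈ range c, qnum q p ^ r * (q^(h*e*i) * carlitzBetaGen (q^p) (q^(Y+e*i)) h r)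
      = ∑ l ∈ range (r+1), q^(h*e*i) * (((1-q)⁻¹)^r * ((r.choose l : K) * (-1)^l *
          (q^(Y+e*i))^l * ((l+h:ℕ):K) * ((1-q^p)/(1-q^(p*(l+h)))))) := by
    intro i _
    rw [mul_left_comm, cbg_expand q hq hq' p hp _ h r hh, Finset.mul_sum, Finset.mul_sum]
  rw [sum_congr rfl step, Finset.sum_comm, Finset.mul_sum]
  refine sum_congr rfl fun l hl => ?_
  have hel : (0:ℕ) < e*(l+h) := Nat.mul_pos he (by omega)
  have hgeom : ∑ i ∈ range c, (q^(e*(l+h)))^i = (1 - q^(e*c*(l+h))) / (1 - q^(e*(l+h))) := by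
    rw [geom_sum_eq (hq' _ hel) c, ← pow_mul, show e*(l+h)*c = e*c*(l+h) by ring,
        ← neg_sub (1:K) (q^(e*c*(l+h))), ← neg_sub (1:K) (q^(e*(l+h))), neg_div_neg_eq]
  calc ∑ i ∈ range c, q^(h*e*i) * (((1-q)⁻¹)^r * ((r.choose l : K) * (-1)^l *
          (q^(Y+e*i))^l * ((l+h:ℕ):K) * ((1-q^p)/(1-q^(p*(l+h))))))
      = (((1-q)⁻¹)^r * ((r.choose l : K) * (-1)^l * (q^Y)^l * ((l+h:ℕ):K) *
          ((1-q^p)/(1-q^(p*(l+h)))))) * ∑ i ∈ range c, (q^(e*(l+h)))^i := by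
        rw [Finset.mul_sum]
        exact sum_congr rfl fun i _ => by ring
    _ = ((1-q)⁻¹)^r * ((r.choose l : K) * (-1)^l * (q^Y)^l * ((l+h:ℕ):K) *
        ((1-q^p) * (1 - q^(e*c*(l+h))) / ((1 - q^(p*(l+h))) * (1 - q^(e*(l+h)))))) := by
        have h1 : (1:K) - q^(p*(l+h)) ≠ 0 := one_sub_ne (hq' _ (Nat.mul_pos hp (by omega)))
        have h2 : (1:K) - q^(e*(l+h)) ≠ 0 := one_sub_ne (hq' _ hel)
        have hq0 : (1:K) - q ≠ 0 := one_sub_ne hq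
        rw [hgeom]
        field_simp

private noncomputable def fA (q : K) (p d u : ℕ) : K :=
  ((u+d:ℕ):K) * (1-q^p) * (1 - q^(p*(u+d)))⁻¹

private noncomputable def gA (q : K) (p1 p2 m d y2 l : ℕ) : K :=
  (q^(m*y2))^l * ((l+d:ℕ):K) * (1-q^p1) * (1 - q^(m*(l+d))) *
    (1 - q^(p1*(l+d)))⁻¹ * (1 - q^(p2*(l+d)))⁻¹

/-- A manifestly symmetric form. -/
private noncomputable def F4 (q : K) (n y1 y2 p1 p2 p3 m : ℕ) : K :=
  (n:K) * (q^(m*y1) * q^(m*y2) * ((1-q)⁻¹)^n *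
    ∑ v ∈ Finset.range n, ((n-1).choose v : K) * (-1)^v * (q^(m*y1))^v * (q^(m*y2))^v *
      ((v+2:ℕ):K) * ((v+2:ℕ):K) * (1-q^p1) * (1-q^p2) * (1-q^p3) * (1 - q^(m*(v+2))) *
      (1 - q^(p1*(v+2)))⁻¹ * (1 - q^(p2*(v+2)))⁻¹ * (1 - q^(p3*(v+2)))⁻¹)
  - ((1-q)⁻¹)^n *
    ∑ u ∈ Finset.range (n+1), (n.choose u : K) * (-1)^u * (q^(m*y1))^u * (q^(m*y2))^u *
      ((u+1:ℕ):K) * ((u+1:ℕ):K) * (1-q^p1) * (1-q^p2) * (1-q^p3) * (1 - q^(m*(u+1))) *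
      (1 - q^(p1*(u+1)))⁻¹ * (1 - q^(p2*(u+1)))⁻¹ * (1 - q^(p3*(u+1)))⁻¹

private lemma F4_sw12 (q : K) (n y1 y2 p1 p2 p3 m : ℕ) :
    F4 q n y1 y2 p1 p2 p3 m = F4 q n y1 y2 p2 p1 p3 m := by
  unfold F4
  congr 1
  · exact congrArg (fun s => (n:K) * (q^(m*y1) * q^(m*y2) * ((1-q)⁻¹)^n * s))
      (sum_congr rfl fun v _ => by ring)
  · exact congrArg (fun s => ((1-q)⁻¹:K)^n * s) (sum_congr rfl fun u _ => by ring)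

private lemma F4_sw23 (q : K) (n y1 y2 p1 p2 p3 m : ℕ) :
    F4 q n y1 y2 p1 p2 p3 m = F4 q n y1 y2 p1 p3 p2 m := by
  unfold F4
  congr 1
  · exact congrArg (fun s => (n:K) * (q^(m*y1) * q^(m*y2) * ((1-q)⁻¹)^n * s))
      (sum_congr rfl fun v _ => by ring)
  · exact congrArg (fun s => ((1-q)⁻¹:K)^n * s) (sum_congr rfl fun u _ => by ring)

private lemma F4_sw13 (q : K) (n y1 y2 p1 p2 p3 m : ℕ) :
    F4 q n y1 y2 p1 p2 p3 m = F4 q n y1 y2 p3 p2 p1 m := by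
  rw [F4_sw12, F4_sw23, F4_sw12]


private lemma E4_eq [CharZero K] (q : K) (hq : q ≠ 1) (hq' : ∀ e : ℕ, 0 < e → q ^ e ≠ 1)
    (a b c y1 y2 n : ℕ) (ha : 0 < a) (hb : 0 < b) (hc : 0 < c) (hn : 0 < n) :
    E4 q n y1 y2 a b c = F4 q n y1 y2 (a*c) (a*b) (b*c) (a*b*c) := by
  obtain ⟨N, rfl⟩ : ∃ N, n = N+1 := ⟨n-1, by omega⟩
  have hab : 0 < a*b := Nat.mul_pos ha hb
  have hbc : 0 < b*c := Nat.mul_pos hb hc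
  have hac : 0 < a*c := Nat.mul_pos ha hc
  have hq0 : (1:K) - q ≠ 0 := one_sub_ne hq
  have hX : ((q:K)^(b*c))^(a*y1) = q^(a*b*c*y1) := by
    rw [← pow_mul]; congr 1; ring
  have H2 : ∀ k ∈ range (N+1+1),
      ((N+1).choose k : K) * carlitzBetaH (q^(b*c)) (N+1-k+1) k (a*y1) *
        q^(a*b*c*(N+1-k)*y1) * qnum q (a*b) * qnum q (b*c)^k * qnum q (a*c)^(N+1-k) *
        (∑ i ∈ range c, q^(a*b*i) *
          carlitzBetaGen (q^(a*c)) (q^(a*b*c*y2 + a*b*i)) 1 (N+1-k))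
      = ((1-q^(a*b)) * (1-q)⁻¹ * ((1-q)⁻¹)^(N+1)) *
        (((N+1).choose k : K) * (q^(a*b*c*y1))^(N+1-k) *
          (∑ j ∈ range (k+1), (k.choose j : K) * (-1)^j * (q^(a*b*c*y1))^j *
            fA q (b*c) 1 (N+1-k+j)) *
          (∑ l ∈ range (N+1-k+1), ((N+1-k).choose l : K) * (-1)^l *
            gA q (a*c) (a*b) (a*b*c) 1 y2 l)) := by
    intro k hk
    simp only [mem_range] at hk
    have e1 := cbg_expand q hq hq' (b*c) hbc (q^(a*b*c*y1)) (N+1-k+1) k (by omega)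
    have e2 := inner_expand q hq hq' (a*b) (a*c) c 1 (N+1-k) (a*b*c*y2) hab hac (by omega)
    simp only [one_mul] at e2
    have hSj : ∑ j ∈ range (k+1), (k.choose j : K) * (-1)^j * (q^(a*b*c*y1))^j *
          ((j+(N+1-k+1):ℕ):K) * ((1-q^(b*c)) / (1 - q^((b*c)*(j+(N+1-k+1)))))
        = ∑ j ∈ range (k+1), (k.choose j : K) * (-1)^j * (q^(a*b*c*y1))^j *
          fA q (b*c) 1 (N+1-k+j) := by
      refine sum_congr rfl fun j hj => ?_
      rw [show j+(N+1-k+1) = (N+1-k+j)+1 by omega]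
      simp only [fA]
      rw [div_eq_mul_inv]
      ring
    have hSl : ∑ l ∈ range (N+1-k+1), ((N+1-k).choose l : K) * (-1)^l *
          (q^(a*b*c*y2))^l * ((l+1:ℕ):K) *
          ((1-q^(a*c)) * (1 - q^(a*b*c*(l+1))) / ((1 - q^(a*c*(l+1))) * (1 - q^(a*b*(l+1)))))
        = ∑ l ∈ range (N+1-k+1), ((N+1-k).choose l : K) * (-1)^l *
          gA q (a*c) (a*b) (a*b*c) 1 y2 l := by
      refine sum_congr rfl fun l hl => ?_
      simp only [gA]
      rw [div_eq_mul_inv, mul_inv]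
      ring
    rw [hSj] at e1
    rw [hSl] at e2
    have hrk : ((1-q)⁻¹:K)^(N+1) = ((1-q)⁻¹)^k * ((1-q)⁻¹)^(N+1-k) := by
      rw [← pow_add]; congr 1; omega
    have hγpow : (q:K)^(a*b*c*(N+1-k)*y1) = (q^(a*b*c*y1))^(N+1-k) := by
      rw [← pow_mul]; congr 1; ring
    calc ((N+1).choose k : K) * carlitzBetaH (q^(b*c)) (N+1-k+1) k (a*y1) *
        q^(a*b*c*(N+1-k)*y1) * qnum q (a*b) * qnum q (b*c)^k * qnum q (a*c)^(N+1-k) *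
        (∑ i ∈ range c, q^(a*b*i) * carlitzBetaGen (q^(a*c)) (q^(a*b*c*y2 + a*b*i)) 1 (N+1-k))
        = ((N+1).choose k : K) * q^(a*b*c*(N+1-k)*y1) * qnum q (a*b) *
          (qnum q (b*c)^k * carlitzBetaGen (q^(b*c)) (q^(a*b*c*y1)) (N+1-k+1) k) *
          (qnum q (a*c)^(N+1-k) * ∑ i ∈ range c, q^(a*b*i) *
            carlitzBetaGen (q^(a*c)) (q^(a*b*c*y2 + a*b*i)) 1 (N+1-k)) := by
          simp only [carlitzBetaH]
          rw [hX]
          ring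
      _ = _ := by
          rw [e1, e2, qnum, hγpow, div_eq_mul_inv, hrk]
          ring
  have H1 : ∀ k ∈ range (N+1),
      (N.choose k : K) * carlitzBetaH (q^(b*c)) (N+1-k+1) k (a*y1) *
        q^(a*b*c*(N+1-k)*y1) * q^(a*b*c*y2) * qnum q (a*b) * qnum q (b*c)^k *
        qnum q (a*c)^(N-k) *
        (∑ i ∈ range c, q^(2*(a*b)*i) *
          carlitzBetaGen (q^(a*c)) (q^(a*b*c*y2 + a*b*i)) 2 (N-k))
      = (q^(a*b*c*y1) * q^(a*b*c*y2) * (1-q^(a*b)) * (1-q)⁻¹ * ((1-q)⁻¹)^N) *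
        ((N.choose k : K) * (q^(a*b*c*y1))^(N-k) *
          (∑ j ∈ range (k+1), (k.choose j : K) * (-1)^j * (q^(a*b*c*y1))^j *
            fA q (b*c) 2 (N-k+j)) *
          (∑ l ∈ range (N-k+1), ((N-k).choose l : K) * (-1)^l *
            gA q (a*c) (a*b) (a*b*c) 2 y2 l)) := by
    intro k hk
    simp only [mem_range] at hk
    have e1 := cbg_expand q hq hq' (b*c) hbc (q^(a*b*c*y1)) (N+1-k+1) k (by omega)
    have e2 := inner_expand q hq hq' (a*b) (a*c) c 2 (N-k) (a*b*c*y2) hab hac (by omega)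
    have hSj : ∑ j ∈ range (k+1), (k.choose j : K) * (-1)^j * (q^(a*b*c*y1))^j *
          ((j+(N+1-k+1):ℕ):K) * ((1-q^(b*c)) / (1 - q^((b*c)*(j+(N+1-k+1)))))
        = ∑ j ∈ range (k+1), (k.choose j : K) * (-1)^j * (q^(a*b*c*y1))^j *
          fA q (b*c) 2 (N-k+j) := by
      refine sum_congr rfl fun j hj => ?_
      rw [show j+(N+1-k+1) = (N-k+j)+2 by omega]
      simp only [fA]
      rw [div_eq_mul_inv]
      ring
    have hSl : ∑ l ∈ range (N-k+1), ((N-k).choose l : K) * (-1)^l *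
          (q^(a*b*c*y2))^l * ((l+2:ℕ):K) *
          ((1-q^(a*c)) * (1 - q^(a*b*c*(l+2))) / ((1 - q^(a*c*(l+2))) * (1 - q^(a*b*(l+2)))))
        = ∑ l ∈ range (N-k+1), ((N-k).choose l : K) * (-1)^l *
          gA q (a*c) (a*b) (a*b*c) 2 y2 l := by
      refine sum_congr rfl fun l hl => ?_
      simp only [gA]
      rw [div_eq_mul_inv, mul_inv]
      ring
    rw [hSj] at e1
    rw [hSl] at e2
    have hrk : ((1-q)⁻¹:K)^N = ((1-q)⁻¹)^k * ((1-q)⁻¹)^(N-k) := by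
      rw [← pow_add]; congr 1; omega
    have hγpow : (q:K)^(a*b*c*(N+1-k)*y1)
        = (q^(a*b*c*y1))^(N-k) * q^(a*b*c*y1) := by
      rw [← pow_mul, ← pow_add]
      congr 1
      rw [show N+1-k = (N-k)+1 by omega]
      ring
    calc (N.choose k : K) * carlitzBetaH (q^(b*c)) (N+1-k+1) k (a*y1) *
        q^(a*b*c*(N+1-k)*y1) * q^(a*b*c*y2) * qnum q (a*b) * qnum q (b*c)^k *
        qnum q (a*c)^(N-k) *
        (∑ i ∈ range c, q^(2*(a*b)*i) *
          carlitzBetaGen (q^(a*c)) (q^(a*b*c*y2 + a*b*i)) 2 (N-k))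
        = (N.choose k : K) * q^(a*b*c*(N+1-k)*y1) * q^(a*b*c*y2) * qnum q (a*b) *
          (qnum q (b*c)^k * carlitzBetaGen (q^(b*c)) (q^(a*b*c*y1)) (N+1-k+1) k) *
          (qnum q (a*c)^(N-k) * ∑ i ∈ range c, q^(2*(a*b)*i) *
            carlitzBetaGen (q^(a*c)) (q^(a*b*c*y2 + a*b*i)) 2 (N-k)) := by
          simp only [carlitzBetaH]
          rw [hX]
          ring
      _ = _ := by
          rw [e1, e2, qnum, hγpow, div_eq_mul_inv, hrk]
          ring
  have hqinv : (q-1) * (1-q)⁻¹ = -1 := by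
    rw [show q-1 = -(1-q) by ring, neg_mul, mul_inv_cancel₀ hq0]
  simp only [E4, Nat.add_sub_cancel]
  rw [sum_congr rfl H1, sum_congr rfl H2, ← Finset.mul_sum, ← Finset.mul_sum,
      keylem N (q^(a*b*c*y1)) (fA q (b*c) 2) (gA q (a*c) (a*b) (a*b*c) 2 y2),
      keylem (N+1) (q^(a*b*c*y1)) (fA q (b*c) 1) (gA q (a*c) (a*b) (a*b*c) 1 y2)]
  simp only [F4, Nat.add_sub_cancel]
  have hrw1 : (1-q^(a*b)) * ∑ v ∈ range (N+1), (N.choose v : K) * (-1)^v *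
        (q^(a*b*c*y1))^v * fA q (b*c) 2 v * gA q (a*c) (a*b) (a*b*c) 2 y2 v
      = ∑ v ∈ range (N+1), (N.choose v : K) * (-1)^v * (q^(a*b*c*y1))^v * (q^(a*b*c*y2))^v *
          ((v+2:ℕ):K) * ((v+2:ℕ):K) * (1-q^(a*c)) * (1-q^(a*b)) * (1-q^(b*c)) *
          (1 - q^(a*b*c*(v+2))) *
          (1 - q^(a*c*(v+2)))⁻¹ * (1 - q^(a*b*(v+2)))⁻¹ * (1 - q^(b*c*(v+2)))⁻¹ := by
    rw [Finset.mul_sum]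
    exact sum_congr rfl fun v _ => by simp only [fA, gA]; ring
  have hrw2 : (1-q^(a*b)) * ∑ u ∈ range (N+1+1), ((N+1).choose u : K) * (-1)^u *
        (q^(a*b*c*y1))^u * fA q (b*c) 1 u * gA q (a*c) (a*b) (a*b*c) 1 y2 u
      = ∑ u ∈ range (N+1+1), ((N+1).choose u : K) * (-1)^u * (q^(a*b*c*y1))^u *
          (q^(a*b*c*y2))^u *
          ((u+1:ℕ):K) * ((u+1:ℕ):K) * (1-q^(a*c)) * (1-q^(a*b)) * (1-q^(b*c)) *
          (1 - q^(a*b*c*(u+1))) *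
          (1 - q^(a*c*(u+1)))⁻¹ * (1 - q^(a*b*(u+1)))⁻¹ * (1 - q^(b*c*(u+1)))⁻¹ := by
    rw [Finset.mul_sum]
    exact sum_congr rfl fun u _ => by simp only [fA, gA]; ring
  linear_combination (((N+1:ℕ):K) * (q^(a*b*c*y1) * q^(a*b*c*y2)) * ((1-q)⁻¹)^(N+1)) * hrw1
    - ((1-q)⁻¹)^(N+1) * hrw2
    + (1-q^(a*b)) * ((1-q)⁻¹)^(N+1) *
        (∑ u ∈ range (N+1+1), ((N+1).choose u : K) * (-1)^u * (q^(a*b*c*y1))^u *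
          fA q (b*c) 1 u * gA q (a*c) (a*b) (a*b*c) 1 y2 u) * hqinv

end SymmAux

/-- Theorem 4 of the paper.  The expression `E₄(w₁,w₂,w₃)` is invariant
under any permutation of `(w₁, w₂, w₃)`. -/
theorem stmt3 {K : Type*} [Field K] [CharZero K] (q : K) (hq : q ≠ 1)
    (hq' : ∀ n : ℕ, 0 < n → q ^ n ≠ 1)
    (w : Fin 3 → ℕ) (hw : ∀ i, 0 < w i) (y1 y2 n : ℕ) (hn : 0 < n)
    (σ : Equiv.Perm (Fin 3)) :
    E4 q n y1 y2 (w (σ 0)) (w (σ 1)) (w (σ 2)) = E4 q n y1 y2 (w 0) (w 1) (w 2) := by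
  have P : ∀ x y z : ℕ, 0 < x → 0 < y → 0 < z →
      E4 q n y1 y2 x y z = F4 q n y1 y2 (x*z) (x*y) (y*z) (x*y*z) :=
    fun x y z hx hy hz => E4_eq q hq hq' x y z y1 y2 n hx hy hz hn
  have e021 : E4 q n y1 y2 (w 0) (w 2) (w 1) = E4 q n y1 y2 (w 0) (w 1) (w 2) := by
    rw [P (w 0) (w 2) (w 1) (hw 0) (hw 2) (hw 1), P (w 0) (w 1) (w 2) (hw 0) (hw 1) (hw 2),
      show w 2 * w 1 = w 1 * w 2 from Nat.mul_comm _ _,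
      show w 0 * w 2 * w 1 = w 0 * w 1 * w 2 from by ring, F4_sw12]
  have e102 : E4 q n y1 y2 (w 1) (w 0) (w 2) = E4 q n y1 y2 (w 0) (w 1) (w 2) := by
    rw [P (w 1) (w 0) (w 2) (hw 1) (hw 0) (hw 2), P (w 0) (w 1) (w 2) (hw 0) (hw 1) (hw 2),
      show w 1 * w 0 = w 0 * w 1 from Nat.mul_comm _ _, F4_sw13]
  have e120 : E4 q n y1 y2 (w 1) (w 2) (w 0) = E4 q n y1 y2 (w 0) (w 1) (w 2) := by
    rw [P (w 1) (w 2) (w 0) (hw 1) (hw 2) (hw 0), P (w 0) (w 1) (w 2) (hw 0) (hw 1) (hw 2),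
      show w 1 * w 0 = w 0 * w 1 from Nat.mul_comm _ _,
      show w 2 * w 0 = w 0 * w 2 from Nat.mul_comm _ _,
      show w 1 * w 2 * w 0 = w 0 * w 1 * w 2 from by ring, F4_sw13, F4_sw23]
  have e201 : E4 q n y1 y2 (w 2) (w 0) (w 1) = E4 q n y1 y2 (w 0) (w 1) (w 2) := by
    rw [P (w 2) (w 0) (w 1) (hw 2) (hw 0) (hw 1), P (w 0) (w 1) (w 2) (hw 0) (hw 1) (hw 2),
      show w 2 * w 1 = w 1 * w 2 from Nat.mul_comm _ _,
      show w 2 * w 0 = w 0 * w 2 from Nat.mul_comm _ _,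
      show w 0 * w 2 * w 1 = w 0 * w 1 * w 2 from by ring, F4_sw13, F4_sw12]
  have e210 : E4 q n y1 y2 (w 2) (w 1) (w 0) = E4 q n y1 y2 (w 0) (w 1) (w 2) := by
    rw [P (w 2) (w 1) (w 0) (hw 2) (hw 1) (hw 0), P (w 0) (w 1) (w 2) (hw 0) (hw 1) (hw 2),
      show w 2 * w 0 = w 0 * w 2 from Nat.mul_comm _ _,
      show w 2 * w 1 = w 1 * w 2 from Nat.mul_comm _ _,
      show w 1 * w 0 = w 0 * w 1 from Nat.mul_comm _ _,
      show w 1 * w 2 * w 0 = w 0 * w 1 * w 2 from by ring, F4_sw23]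
  have hv : ∀ i : Fin 3, i = 0 ∨ i = 1 ∨ i = 2 := by decide
  have inj := σ.injective
  rcases hv (σ 0) with h0|h0|h0 <;> rcases hv (σ 1) with h1|h1|h1 <;>
    rcases hv (σ 2) with h2|h2|h2 <;>
    first
      | exact absurd (inj (h0.trans h1.symm)) (by decide)
      | exact absurd (inj (h0.trans h2.symm)) (by decide)
      | exact absurd (inj (h1.trans h2.symm)) (by decide)
      | (rw [h0, h1, h2]; exact e021)
      | (rw [h0, h1, h2]; exact e102)
      | (rw [h0, h1, h2]; exact e120)
      | (rw [h0, h1, h2]; exact e201)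
      | (rw [h0, h1, h2]; exact e210)
      | rw [h0, h1, h2]
end

section
/- Let w₁, w₂, w₃ be positive integers, y₁, y₂ nonnegative integers and n a positive integer. Then ∑_{k+l+m=n−1} binom(n;k,l,m) · β_{k,q^{w₂w₃}}^{(l+m+2)}(w₁y₁) · β_{l,q^{w₁w₃}}^{(m+2)}(w₂y₂) · T_{2,m}(w₃−1 | q^{w₁w₂}) · q^{w₁w₂w₃(l+m+1)y₁} · q^{w₁w₂w₃(m+1)y₂} · [w₂w₃]_q^k · [w₁w₃]_q^l · [w₁w₂]_q^{m+1} + (q−1) ∑_{k+l+m=n} binom(n;k,l,m) · β_{k,q^{w₂w₃}}^{(l+m+1)}(w₁y₁) · β_{l,q^{w₁w₃}}^{(m+1)}(w₂y₂) · T_{1,m}(w₃−1 | q^{w₁w₂}) · q^{w₁w₂w₃(l+m)y₁} · q^{w₁w₂w₃ m y₂} · [w₂w₃]_q^k · [w₁w₃]_q^l · [w₁w₂]_q^{m+1} = n ∑_{k=0}^{n−1} binom(n−1,k) · β_{k,q^{w₂w₃}}^{(n−k+1)}(w₁y₁) · q^{w₁w₂w₃(n−k)y₁} · q^{w₁w₂w₃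 y₂} · [w₁w₂]_q · [w₂w₃]_q^k · [w₁w₃]_q^{n−1−k} · ∑_{i=0}^{w₃−1} q^{2w₁w₂ i} · β_{n−1−k,q^{w₁w₃}}^{(2)}(w₂y₂ + (w₂/w₃)i) + (q−1) ∑_{k=0}^{n} binom(n,k) · β_{k,q^{w₂w₃}}^{(n−k+1)}(w₁y₁) · q^{w₁w₂w₃(n−k)y₁} · [w₁w₂]_q · [w₂w₃]_q^k · [w₁w₃]_q^{n−k} · ∑_{i=0}^{w₃−1} q^{w₁w₂ i} · β_{n−k,q^{w₁w₃}}(w₂y₂ + (w₂/w₃)i). -/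
open Finset

/-- The `q`-power sums `T_{n,m}(w|q) = ∑_{i=0}^{w} q^{ni} [i]_q^m`. -/
noncomputable def qT {K : Type*} [Field K] (q : K) (n m w : ℕ) : K :=
  ∑ i ∈ Finset.range (w + 1), q ^ (n * i) * qnum q i ^ m

/-- The multinomial coefficient `binom(n; k, l, m) = n! / (k! l! m!)`. -/
def multi3 (n k l m : ℕ) : ℕ :=
  n.factorial / (k.factorial * l.factorial * m.factorial)

private lemma multi3_eq {n k l m : ℕ} (h : k + l + m = n) :
    multi3 n k l m = n.choose k * (n - k).choose l := by
  have hk : k ≤ n := by omega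
  have hlm : n - k = l + m := by omega
  have e2 : (l + m).choose l * l.factorial * m.factorial = (l + m).factorial := by
    have := Nat.choose_mul_factorial_mul_factorial (Nat.le_add_right l m)
    simpa using this
  have h1 : (n.choose k * (n - k).choose l) * (k.factorial * l.factorial * m.factorial)
      = n.factorial := by
    rw [← Nat.choose_mul_factorial_mul_factorial hk, hlm, ← e2]; ring
  have pos : 0 < k.factorial * l.factorial * m.factorial := by positivity
  rw [multi3, ← h1, Nat.mul_div_cancel _ pos]

private lemma multi3_eq' {n k l m : ℕ} (hn : 0 < n) (h : k + l + m = n - 1) :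
    multi3 n k l m = n * ((n - 1).choose k * ((n - 1 - k).choose l)) := by
  have hk : k ≤ n - 1 := by omega
  have hlm : n - 1 - k = l + m := by omega
  have e2 : (l + m).choose l * l.factorial * m.factorial = (l + m).factorial := by
    have := Nat.choose_mul_factorial_mul_factorial (Nat.le_add_right l m)
    simpa using this
  have h1 : (n * ((n - 1).choose k * ((n - 1 - k).choose l))) *
      (k.factorial * l.factorial * m.factorial) = n.factorial := by
    rw [← Nat.mul_factorial_pred hn.ne', ← Nat.choose_mul_factorial_mul_factorial hk, hlm, ← e2]
    ring
  have pos : 0 < k.factorial * l.factorial * m.factorial := by positivity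
  rw [multi3, ← h1, Nat.mul_div_cancel _ pos]

private lemma triangle {M : Type*} [AddCommMonoid M] (r : ℕ) (F : ℕ → ℕ → M) :
    ∑ m ∈ range (r + 1), ∑ s ∈ Icc m r, F m s
      = ∑ s ∈ range (r + 1), ∑ m ∈ range (s + 1), F m s := by
  rw [Finset.sum_sigma', Finset.sum_sigma']
  apply Finset.sum_nbij' (fun p => (⟨p.2, p.1⟩ : (_ : ℕ) × ℕ))
    (fun p => (⟨p.2, p.1⟩ : (_ : ℕ) × ℕ)) <;>
    simp +contextual [Nat.lt_succ_iff] <;> omega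

private lemma lemA {K : Type*} [Field K] (a b : K) (g : ℕ → K) (r : ℕ) :
    ∑ m ∈ range (r + 1), (r.choose m : K) * a ^ m *
        ∑ j ∈ range (r - m + 1), ((r - m).choose j : K) * b ^ j * g (m + j)
      = ∑ s ∈ range (r + 1), (r.choose s : K) * (a + b) ^ s * g s := by
  have step : ∀ m ∈ range (r + 1),
      (r.choose m : K) * a ^ m *
          ∑ j ∈ range (r - m + 1), ((r - m).choose j : K) * b ^ j * g (m + j)
        = ∑ s ∈ Icc m r,
            (r.choose m : K) * a ^ m * (((r - m).choose (s - m) : K) * b ^ (s - m) * g s) := by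
    intro m hm
    have hm' : m ≤ r := Nat.lt_succ_iff.mp (Finset.mem_range.mp hm)
    rw [Finset.mul_sum]
    apply Finset.sum_nbij' (fun j => m + j) (fun s => s - m) <;>
      simp +contextual [Nat.lt_succ_iff] <;> omega
  rw [Finset.sum_congr rfl step, triangle]
  refine Finset.sum_congr rfl fun s hs => ?_
  have hs' : s ≤ r := Nat.lt_succ_iff.mp (Finset.mem_range.mp hs)
  conv_rhs => rw [add_pow]
  rw [Finset.mul_sum, Finset.sum_mul]
  refine Finset.sum_congr rfl fun m hm => ?_
  have hm' : m ≤ s := Nat.lt_succ_iff.mp (Finset.mem_range.mp hm)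
  have hcc : (r.choose s : K) * (s.choose m : K)
      = (r.choose m : K) * ((r - m).choose (s - m) : K) := by
    exact_mod_cast congrArg (Nat.cast (R := K)) (Nat.choose_mul hm' : r.choose s * s.choose m = _)
  linear_combination (-(a ^ m * b ^ (s - m) * g s)) * hcc

private lemma lemA' {K : Type*} [Field K] (a b : K) (g : ℕ → K) (r : ℕ) :
    ∑ l ∈ range (r + 1), (r.choose l : K) * a ^ (r - l) *
        ∑ j ∈ range (l + 1), (l.choose j : K) * b ^ j * g (r - l + j)
      = ∑ s ∈ range (r + 1), (r.choose s : K) * (a + b) ^ s * g s := by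
  rw [← lemA a b g r, ← Finset.sum_range_reflect]
  refine Finset.sum_congr rfl fun l hl => ?_
  have hl' : l ≤ r := Nat.lt_succ_iff.mp (Finset.mem_range.mp hl)
  simp only [Nat.add_sub_cancel]
  rw [Nat.choose_symm hl', Nat.sub_sub_self hl']

private lemma qT_eq {K : Type*} [Field K] (P : K) (hP : (1 : K) - P ≠ 0) (h m W : ℕ) :
    qT P h m W = ((1 - P) ^ m)⁻¹ * ∑ i ∈ range (W + 1), P ^ (h * i) * (1 - P ^ i) ^ m := by
  rw [qT, Finset.mul_sum]
  refine Finset.sum_congr rfl fun i _ => ?_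
  rw [qnum, div_pow]
  field_simp

private lemma scal {K : Type*} [Field K] (C S p z A B cc Y : K) (l m h : ℕ) (hh : 1 ≤ h)
    (hA : A ≠ 0) (hB : B ≠ 0) (hcc : cc ≠ 0) :
    (C * ((A ^ l)⁻¹ * S) * ((B ^ m)⁻¹ * (p * z ^ m)) * Y ^ (m + h - 1) * (A / cc) ^ l *
        (B / cc) ^ (m + 1))
      = Y ^ (h - 1) * B * ((cc ^ (l + m + 1))⁻¹) * (C * (p * (z * Y) ^ m) * S) := by
  rw [show m + h - 1 = m + (h - 1) from by omega]
  rw [pow_add Y m (h - 1), pow_add cc (l + m) 1, pow_add cc l m, mul_pow z Y,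
    div_pow A cc l, div_pow B cc (m + 1), pow_add B m 1, pow_add cc m 1]
  field_simp

private lemma scal2 {K : Type*} [Field K] (A B c p T Yh : K) (hA : A ≠ 0) (hc : c ≠ 0) (r : ℕ) :
    Yh * B * ((c ^ (r + 1))⁻¹) * (p * T)
      = Yh * (B / c) * ((A / c) ^ r) * (p * ((A ^ r)⁻¹ * T)) := by
  rw [div_pow, pow_succ]
  field_simp

private lemma keyB {K : Type*} [Field K] (q Q P Y : K) (hc : (1 : K) - q ≠ 0)
    (hQ : (1 : K) - Q ≠ 0) (hP : (1 : K) - P ≠ 0) (h r W : ℕ) (hh : 1 ≤ h) :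
    ∑ l ∈ range (r + 1),
        (r.choose l : K) * carlitzBetaGen Q Y (r - l + h) l * qT P h (r - l) W *
          Y ^ (r - l + h - 1) * ((1 - Q) / (1 - q)) ^ l * ((1 - P) / (1 - q)) ^ (r - l + 1)
      = Y ^ (h - 1) * ((1 - P) / (1 - q)) * ((1 - Q) / (1 - q)) ^ r *
          ∑ i ∈ range (W + 1), P ^ (h * i) * carlitzBetaGen Q (Y * P ^ i) h r := by
  set c := (1 : K) - q with hcdef
  set g : ℕ → K := fun s => ((s + h : ℕ) : K) / qnum Q (s + h) with hg
  have hbeta : ∀ (X : K) (m d : ℕ), carlitzBetaGen Q X (m + h) d =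
      ((1 - Q) ^ d)⁻¹ * ∑ j ∈ range (d + 1), (d.choose j : K) * (-X) ^ j * g (m + j) := by
    intro X m d
    rw [carlitzBetaGen]
    congr 1
    refine Finset.sum_congr rfl fun j _ => ?_
    rw [hg]
    rw [show j + (m + h) = m + j + h from by omega, neg_pow]
    simp only [div_eq_mul_inv]
    ring
  have hbeta0 : ∀ X : K, carlitzBetaGen Q X h r =
      ((1 - Q) ^ r)⁻¹ * ∑ j ∈ range (r + 1), (r.choose j : K) * (-X) ^ j * g j := by
    intro X
    have := hbeta X 0 r
    simpa using this
  have distr : ∀ (a b c1 c2 c3 : K) (f : ℕ → K),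
      a * (b * ∑ i ∈ range (W + 1), f i) * c1 * c2 * c3
        = ∑ i ∈ range (W + 1), a * (b * f i) * c1 * c2 * c3 := by
    intro a b c1 c2 c3 f
    rw [Finset.mul_sum, Finset.mul_sum, Finset.sum_mul, Finset.sum_mul, Finset.sum_mul]
  have L : ∑ l ∈ range (r + 1),
        (r.choose l : K) * carlitzBetaGen Q Y (r - l + h) l * qT P h (r - l) W *
          Y ^ (r - l + h - 1) * ((1 - Q) / c) ^ l * ((1 - P) / c) ^ (r - l + 1)
      = ∑ l ∈ range (r + 1), ∑ i ∈ range (W + 1),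
          Y ^ (h - 1) * (1 - P) * ((c ^ (r + 1))⁻¹) *
            ((r.choose l : K) * (P ^ (h * i) * ((1 - P ^ i) * Y) ^ (r - l)) *
              ∑ j ∈ range (l + 1), (l.choose j : K) * (-Y) ^ j * g (r - l + j)) := by
    refine Finset.sum_congr rfl fun l hl => ?_
    have hl' : l ≤ r := Nat.lt_succ_iff.mp (Finset.mem_range.mp hl)
    rw [hbeta Y (r - l) l, qT_eq P hP h (r - l) W, distr]
    refine Finset.sum_congr rfl fun i _ => ?_
    rw [show ((c : K) ^ (r + 1))⁻¹ = (c ^ (l + (r - l) + 1))⁻¹ from by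
      rw [show l + (r - l) + 1 = r + 1 from by omega]]
    exact scal _ _ _ _ _ _ _ _ l (r - l) h hh hQ hP hc
  rw [L, Finset.sum_comm, Finset.mul_sum]
  refine Finset.sum_congr rfl fun i _ => ?_
  rw [hbeta0 (Y * P ^ i)]
  conv_lhs => rw [← Finset.mul_sum]
  rw [show ∑ l ∈ range (r + 1),
        (r.choose l : K) * (P ^ (h * i) * ((1 - P ^ i) * Y) ^ (r - l)) *
          ∑ j ∈ range (l + 1), (l.choose j : K) * (-Y) ^ j * g (r - l + j)
      = P ^ (h * i) * ∑ l ∈ range (r + 1),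
          (r.choose l : K) * ((1 - P ^ i) * Y) ^ (r - l) *
            ∑ j ∈ range (l + 1), (l.choose j : K) * (-Y) ^ j * g (r - l + j) from by
    rw [Finset.mul_sum]; exact Finset.sum_congr rfl fun l _ => by ring]
  rw [lemA' ((1 - P ^ i) * Y) (-Y) g r,
    show (1 - P ^ i) * Y + -Y = -(Y * P ^ i) from by ring]
  exact scal2 _ _ _ _ _ _ hQ hc r

private lemma e21 : ∀ m : ℕ, m + 2 - 1 = m + 1 := fun m => rfl

private lemma bridge {K : Type*} [Field K] (q : K) (hc : (1 : K) - q ≠ 0)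
    (w1 w2 w3 : ℕ) (hw3 : 0 < w3)
    (hQ : (1 : K) - q ^ (w1 * w3) ≠ 0) (hP : (1 : K) - q ^ (w1 * w2) ≠ 0)
    (y2 r h : ℕ) (hh : 1 ≤ h) :
    ∑ l ∈ range (r + 1),
        (r.choose l : K) * carlitzBetaH (q ^ (w1 * w3)) (r - l + h) l (w2 * y2) *
          qT (q ^ (w1 * w2)) h (r - l) (w3 - 1) *
          q ^ (w1 * w2 * w3 * (r - l + h - 1) * y2) *
          qnum q (w1 * w3) ^ l * qnum q (w1 * w2) ^ (r - l + 1)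
      = q ^ (w1 * w2 * w3 * (h - 1) * y2) * qnum q (w1 * w2) * qnum q (w1 * w3) ^ r *
          ∑ i ∈ range w3,
            q ^ (h * (w1 * w2) * i) *
              carlitzBetaGen (q ^ (w1 * w3)) (q ^ (w1 * w2 * w3 * y2 + w1 * w2 * i)) h r := by
  have hY : ∀ s : ℕ, q ^ (w1 * w2 * w3 * s * y2) = (q ^ (w1 * w2 * w3 * y2)) ^ s := by
    intro s; rw [← pow_mul]; congr 1; ring
  have hYY : (q ^ (w1 * w3)) ^ (w2 * y2) = q ^ (w1 * w2 * w3 * y2) := by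
    rw [← pow_mul]; congr 1; ring
  have hX : ∀ i : ℕ, q ^ (w1 * w2 * w3 * y2 + w1 * w2 * i)
      = q ^ (w1 * w2 * w3 * y2) * (q ^ (w1 * w2)) ^ i := by
    intro i; rw [← pow_mul, ← pow_add]
  have hPi : ∀ i : ℕ, q ^ (h * (w1 * w2) * i) = (q ^ (w1 * w2)) ^ (h * i) := by
    intro i; rw [← pow_mul]; congr 1; ring
  have hr : range w3 = range ((w3 - 1) + 1) := by congr 1; omega
  simp only [carlitzBetaH, hYY, hY, hX, hPi, hr, qnum]
  exact keyB q (q ^ (w1 * w3)) (q ^ (w1 * w2)) (q ^ (w1 * w2 * w3 * y2)) hc hQ hP h r (w3 - 1) hh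

/-- For positive integers `w₁, w₂, w₃`, nonnegative integers `y₁, y₂`
and a positive integer `n`, the two expressions for `I₁` obtained in the paper
(the one of Theorem 3 and the one of Theorem 4) coincide; the value
`β_{n,Q}^{(h)}(w₂y₂ + (w₂/w₃)i)` with `Q = q^{w₁w₃}` is interpreted via
`Q^{j(w₂y₂ + (w₂/w₃)i)} = q^{j(w₁w₂w₃y₂ + w₁w₂ i)}`. -/
theorem stmt6 {K : Type*} [Field K] [CharZero K] (q : K) (hq : q ≠ 1)
    (hq' : ∀ n : ℕ, 0 < n → q ^ n ≠ 1)
    (w1 w2 w3 : ℕ) (hw1 : 0 < w1) (hw2 : 0 < w2) (hw3 : 0 < w3)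
    (y1 y2 n : ℕ) (hn : 0 < n) :
    (∑ k ∈ Finset.range n, ∑ l ∈ Finset.range (n - k),
      (multi3 n k l (n - 1 - k - l) : K) *
        carlitzBetaH (q ^ (w2 * w3)) (l + (n - 1 - k - l) + 2) k (w1 * y1) *
        carlitzBetaH (q ^ (w1 * w3)) ((n - 1 - k - l) + 2) l (w2 * y2) *
        qT (q ^ (w1 * w2)) 2 (n - 1 - k - l) (w3 - 1) *
        q ^ (w1 * w2 * w3 * (l + (n - 1 - k - l) + 1) * y1) *
        q ^ (w1 * w2 * w3 * ((n - 1 - k - l) + 1) * y2) *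
        qnum q (w2 * w3) ^ k * qnum q (w1 * w3) ^ l *
        qnum q (w1 * w2) ^ ((n - 1 - k - l) + 1))
    + (q - 1) *
      (∑ k ∈ Finset.range (n + 1), ∑ l ∈ Finset.range (n + 1 - k),
        (multi3 n k l (n - k - l) : K) *
          carlitzBetaH (q ^ (w2 * w3)) (l + (n - k - l) + 1) k (w1 * y1) *
          carlitzBetaH (q ^ (w1 * w3)) ((n - k - l) + 1) l (w2 * y2) *
          qT (q ^ (w1 * w2)) 1 (n - k - l) (w3 - 1) *
          q ^ (w1 * w2 * w3 * (l + (n - k - l)) * y1) *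
          q ^ (w1 * w2 * w3 * (n - k - l) * y2) *
          qnum q (w2 * w3) ^ k * qnum q (w1 * w3) ^ l *
          qnum q (w1 * w2) ^ ((n - k - l) + 1))
    = (n : K) *
        (∑ k ∈ Finset.range n,
          ((n - 1).choose k : K) *
            carlitzBetaH (q ^ (w2 * w3)) (n - k + 1) k (w1 * y1) *
            q ^ (w1 * w2 * w3 * (n - k) * y1) * q ^ (w1 * w2 * w3 * y2) *
            qnum q (w1 * w2) * qnum q (w2 * w3) ^ k * qnum q (w1 * w3) ^ (n - 1 - k) *
            ∑ i ∈ Finset.range w3,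
              q ^ (2 * (w1 * w2) * i) *
                carlitzBetaGen (q ^ (w1 * w3)) (q ^ (w1 * w2 * w3 * y2 + w1 * w2 * i)) 2
                  (n - 1 - k))
      + (q - 1) *
        ∑ k ∈ Finset.range (n + 1),
          (n.choose k : K) *
            carlitzBetaH (q ^ (w2 * w3)) (n - k + 1) k (w1 * y1) *
            q ^ (w1 * w2 * w3 * (n - k) * y1) *
            qnum q (w1 * w2) * qnum q (w2 * w3) ^ k * qnum q (w1 * w3) ^ (n - k) *
            ∑ i ∈ Finset.range w3,
              q ^ (w1 * w2 * i) *
                carlitzBetaGen (q ^ (w1 * w3)) (q ^ (w1 * w2 * w3 * y2 + w1 * w2 * i)) 1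
                  (n - k) := by
  have hc : (1 : K) - q ≠ 0 := sub_ne_zero.mpr (Ne.symm hq)
  have hQ2 : (1 : K) - q ^ (w1 * w3) ≠ 0 :=
    sub_ne_zero.mpr (Ne.symm (hq' _ (Nat.mul_pos hw1 hw3)))
  have hP : (1 : K) - q ^ (w1 * w2) ≠ 0 :=
    sub_ne_zero.mpr (Ne.symm (hq' _ (Nat.mul_pos hw1 hw2)))
  refine congrArg₂ (· + ·) ?_ (congrArg (HMul.hMul (q - 1)) ?_)
  · -- first sums
    rw [Finset.mul_sum]
    refine Finset.sum_congr rfl fun k hk => ?_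
    have hk' : k < n := Finset.mem_range.mp hk
    rw [show n - k = n - 1 - k + 1 from by omega,
      show n - 1 - k + 1 + 1 = n - 1 - k + 2 from by omega]
    have B2 := bridge q hc w1 w2 w3 hw3 hQ2 hP y2 (n - 1 - k) 2 (by norm_num)
    simp only [e21, show (2 : ℕ) - 1 = 1 from rfl, mul_one] at B2
    calc ∑ l ∈ Finset.range (n - 1 - k + 1),
        (multi3 n k l (n - 1 - k - l) : K) *
          carlitzBetaH (q ^ (w2 * w3)) (l + (n - 1 - k - l) + 2) k (w1 * y1) *
          carlitzBetaH (q ^ (w1 * w3)) ((n - 1 - k - l) + 2) l (w2 * y2) *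
          qT (q ^ (w1 * w2)) 2 (n - 1 - k - l) (w3 - 1) *
          q ^ (w1 * w2 * w3 * (l + (n - 1 - k - l) + 1) * y1) *
          q ^ (w1 * w2 * w3 * ((n - 1 - k - l) + 1) * y2) *
          qnum q (w2 * w3) ^ k * qnum q (w1 * w3) ^ l *
          qnum q (w1 * w2) ^ ((n - 1 - k - l) + 1)
        = ((n : K) * ((n - 1).choose k : K) *
            carlitzBetaH (q ^ (w2 * w3)) (n - 1 - k + 2) k (w1 * y1) *
            q ^ (w1 * w2 * w3 * (n - 1 - k + 1) * y1) * qnum q (w2 * w3) ^ k) *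
          ∑ l ∈ Finset.range (n - 1 - k + 1),
            ((n - 1 - k).choose l : K) *
              carlitzBetaH (q ^ (w1 * w3)) (n - 1 - k - l + 2) l (w2 * y2) *
              qT (q ^ (w1 * w2)) 2 (n - 1 - k - l) (w3 - 1) *
              q ^ (w1 * w2 * w3 * (n - 1 - k - l + 1) * y2) *
              qnum q (w1 * w3) ^ l * qnum q (w1 * w2) ^ (n - 1 - k - l + 1) := by
            rw [Finset.mul_sum]
            refine Finset.sum_congr rfl fun l hl => ?_
            have hl' : l ≤ n - 1 - k := Nat.lt_succ_iff.mp (Finset.mem_range.mp hl)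
            rw [Nat.add_sub_cancel' hl', multi3_eq' (by omega) (by omega)]
            push_cast
            ring
      _ = _ := by rw [B2]; ring
  · -- second sums
    refine Finset.sum_congr rfl fun k hk => ?_
    have hk' : k ≤ n := Nat.lt_succ_iff.mp (Finset.mem_range.mp hk)
    rw [show n + 1 - k = n - k + 1 from by omega]
    have B1 := bridge q hc w1 w2 w3 hw3 hQ2 hP y2 (n - k) 1 le_rfl
    simp only [Nat.add_sub_cancel, Nat.sub_self, Nat.mul_zero, Nat.zero_mul, mul_zero, zero_mul,
      pow_zero, one_mul] at B1
    calc ∑ l ∈ Finset.range (n - k + 1),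
        (multi3 n k l (n - k - l) : K) *
          carlitzBetaH (q ^ (w2 * w3)) (l + (n - k - l) + 1) k (w1 * y1) *
          carlitzBetaH (q ^ (w1 * w3)) ((n - k - l) + 1) l (w2 * y2) *
          qT (q ^ (w1 * w2)) 1 (n - k - l) (w3 - 1) *
          q ^ (w1 * w2 * w3 * (l + (n - k - l)) * y1) *
          q ^ (w1 * w2 * w3 * (n - k - l) * y2) *
          qnum q (w2 * w3) ^ k * qnum q (w1 * w3) ^ l *
          qnum q (w1 * w2) ^ ((n - k - l) + 1)
        = ((n.choose k : K) *
            carlitzBetaH (q ^ (w2 * w3)) (n - k + 1) k (w1 * y1) *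
            q ^ (w1 * w2 * w3 * (n - k) * y1) * qnum q (w2 * w3) ^ k) *
          ∑ l ∈ Finset.range (n - k + 1),
            ((n - k).choose l : K) *
              carlitzBetaH (q ^ (w1 * w3)) (n - k - l + 1) l (w2 * y2) *
              qT (q ^ (w1 * w2)) 1 (n - k - l) (w3 - 1) *
              q ^ (w1 * w2 * w3 * (n - k - l) * y2) *
              qnum q (w1 * w3) ^ l * qnum q (w1 * w2) ^ (n - k - l + 1) := by
            rw [Finset.mul_sum]
            refine Finset.sum_congr rfl fun l hl => ?_
            have hl' : l ≤ n - k := Nat.lt_succ_iff.mp (Finset.mem_range.mp hl)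
            rw [Nat.add_sub_cancel' hl', multi3_eq (by omega)]
            push_cast
            ring
      _ = _ := by rw [B1]; ring
end
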